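/- arXiv:2305.05102 — 3 statements merged into one kernel-verified Lean document; each statement's English description precedes it below -/
import Mathlib

section
/- Let a(ξ) = ξ²·coth(ξ) for ξ ≠ 0, extended by a(0) = 0. If real numbers ξ, η satisfy a(ξ+η) = a(ξ) + a(η), then ξ = 0 or η = 0 or ξ + η = 0. -/
/-- The ILW dispersion symbol `a(ξ) = ξ² coth ξ`, with `a 0 = 0`
(note `cosh 0 / sinh 0 = 1/0 = 0` by Lean's convention). -/
noncomputable def ilwA (ξ : ℝ) : ℝ := ξ ^ 2 * Real.cosh ξ / Real.sinh ξ

namespace IlwAux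

open Real Set

lemma lt_sinh_mul_cosh {x : ℝ} (hx : 0 < x) : x < Real.sinh x * Real.cosh x := by
  have h1 : 2 * x < Real.sinh (2 * x) := Real.self_lt_sinh_iff.2 (by linarith)
  have h2 : Real.sinh (2 * x) = 2 * (Real.sinh x * Real.cosh x) := by
    rw [two_mul, Real.sinh_add]; ring
  linarith

/-- `g x = x cosh x / sinh x` is strictly increasing on `(0,∞)`. -/
lemma g_strictMono : StrictMonoOn (fun x : ℝ => x * Real.cosh x / Real.sinh x) (Ioi 0) := by
  have hderiv : ∀ x ∈ Ioi (0:ℝ), HasDerivAt (fun x : ℝ => x * Real.cosh x / Real.sinh x)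
      (((1 * Real.cosh x + x * Real.sinh x) * Real.sinh x - x * Real.cosh x * Real.cosh x)
        / Real.sinh x ^ 2) x := by
    intro x hx
    have hs : Real.sinh x ≠ 0 := ne_of_gt (Real.sinh_pos_iff.2 hx)
    exact ((hasDerivAt_id x).mul (Real.hasDerivAt_cosh x)).div (Real.hasDerivAt_sinh x) hs
  apply strictMonoOn_of_hasDerivWithinAt_pos (convex_Ioi 0)
    (fun x hx => ((hderiv x hx).continuousAt.continuousWithinAt))
    (fun x hx => ((hderiv x (interior_subset hx)).hasDerivWithinAt))
  intro x hx
  rw [interior_Ioi] at hx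
  have hx0 : (0:ℝ) < x := hx
  have hsp : 0 < Real.sinh x := Real.sinh_pos_iff.2 hx
  have hkey : x < Real.sinh x * Real.cosh x := lt_sinh_mul_cosh hx
  have hid : Real.cosh x ^ 2 - Real.sinh x ^ 2 = 1 := Real.cosh_sq_sub_sinh_sq x
  have hnum : 0 < (1 * Real.cosh x + x * Real.sinh x) * Real.sinh x
      - x * Real.cosh x * Real.cosh x := by nlinarith [hsp, hkey, hid, hx0, Real.cosh_pos x]
  positivity

lemma ilwA_eq (x : ℝ) : ilwA x = x * (x * Real.cosh x / Real.sinh x) := by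
  unfold ilwA; ring

lemma ilwA_neg (x : ℝ) : ilwA (-x) = -ilwA x := by
  unfold ilwA
  rw [Real.sinh_neg, Real.cosh_neg, neg_sq, div_neg]

/-- Strict superadditivity of `ilwA` on positive reals. -/
lemma superadd {x y : ℝ} (hx : 0 < x) (hy : 0 < y) : ilwA x + ilwA y < ilwA (x + y) := by
  have hxy : 0 < x + y := by linarith
  have h1 : x * Real.cosh x / Real.sinh x < (x+y) * Real.cosh (x+y) / Real.sinh (x+y) :=
    g_strictMono hx hxy (by linarith)
  have h2 : y * Real.cosh y / Real.sinh y < (x+y) * Real.cosh (x+y) / Real.sinh (x+y) :=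
    g_strictMono hy hxy (by linarith)
  rw [ilwA_eq, ilwA_eq, ilwA_eq]
  nlinarith

end IlwAux

theorem ilw_resonances (ξ η : ℝ) (h : ilwA (ξ + η) = ilwA ξ + ilwA η) :
    ξ = 0 ∨ η = 0 ∨ ξ + η = 0 := by
  by_contra hc
  push_neg at hc
  obtain ⟨hξ, hη, hs⟩ := hc
  rcases hξ.lt_or_gt with hξn | hξp
  · rcases hη.lt_or_gt with hηn | hηp
    · -- both negative
      have := IlwAux.superadd (neg_pos.2 hξn) (neg_pos.2 hηn)
      rw [show (-ξ) + (-η) = -(ξ + η) by ring, IlwAux.ilwA_neg, IlwAux.ilwA_neg,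
        IlwAux.ilwA_neg] at this
      linarith
    · -- ξ < 0 < η
      rcases hs.lt_or_gt with hsn | hsp
      · -- ξ + η < 0 : η = (ξ+η) consumed; use -(ξ+η) and η positive: -ξ = η + (-(ξ+η))
        have := IlwAux.superadd hηp (neg_pos.2 hsn)
        rw [show η + -(ξ + η) = -ξ by ring, IlwAux.ilwA_neg, IlwAux.ilwA_neg] at this
        linarith
      · -- ξ + η > 0 : η = (ξ+η) + (-ξ)
        have := IlwAux.superadd hsp (neg_pos.2 hξn)
        rw [show ξ + η + -ξ = η by ring, IlwAux.ilwA_neg] at this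
        linarith
  · rcases hη.lt_or_gt with hηn | hηp
    · -- η < 0 < ξ
      rcases hs.lt_or_gt with hsn | hsp
      · have := IlwAux.superadd hξp (neg_pos.2 hsn)
        rw [show ξ + -(ξ + η) = -η by ring, IlwAux.ilwA_neg, IlwAux.ilwA_neg] at this
        linarith
      · have := IlwAux.superadd hsp (neg_pos.2 hηn)
        rw [show ξ + η + -η = ξ by ring, IlwAux.ilwA_neg] at this
        linarith
    · -- both positive
      have := IlwAux.superadd hξp hηp
      linarith
end

section
/- Let a(ξ) = ξ²coth(ξ) (a(0)=0) and define m(ξ) = ξ·a′(ξ) − 2a(ξ). Then m is an odd, real-analytic function on ℝ, and there exist K, c > 0 with |m(ξ)| ≤ K·e^{−c|ξ|} for all ξ ∈ ℝ. -/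
/-- `m(ξ) = ξ a'(ξ) − 2 a(ξ)`, measuring the failure of homogeneity of degree 2. -/
noncomputable def ilwM (ξ : ℝ) : ℝ := ξ * deriv ilwA ξ - 2 * ilwA ξ

lemma analyticAt_sinh (x : ℝ) : AnalyticAt ℝ Real.sinh x := by
  have h : Real.sinh = fun y : ℝ => (Real.exp y - Real.exp (-y)) / 2 := funext Real.sinh_eq
  rw [h]
  exact ((analyticAt_rexp.sub (analyticAt_rexp.comp (analyticAt_id.neg))).div
    analyticAt_const (by norm_num))

lemma ilwM_eq (ξ : ℝ) : ilwM ξ = -ξ ^ 3 / Real.sinh ξ ^ 2 := by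
  rcases eq_or_ne ξ 0 with rfl | hξ
  · simp [ilwM, ilwA]
  · have hs : Real.sinh ξ ≠ 0 := Real.sinh_ne_zero.2 hξ
    have h1 : HasDerivAt (fun x : ℝ => x ^ 2 * Real.cosh x)
        (2 * ξ * Real.cosh ξ + ξ ^ 2 * Real.sinh ξ) ξ := by
      have := (hasDerivAt_pow 2 ξ).mul (Real.hasDerivAt_cosh ξ)
      exact this.congr_deriv (by norm_num)
    have h2 := h1.div (Real.hasDerivAt_sinh ξ) hs
    have hA : deriv ilwA ξ =
        ((2 * ξ * Real.cosh ξ + ξ ^ 2 * Real.sinh ξ) * Real.sinh ξ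
          - ξ ^ 2 * Real.cosh ξ * Real.cosh ξ) / Real.sinh ξ ^ 2 := h2.deriv
    rw [ilwM, hA, ilwA]
    have hc := Real.cosh_sq ξ
    field_simp
    linear_combination (-ξ) * hc

lemma dslope_sinh_ne_zero (x : ℝ) : dslope Real.sinh 0 x ≠ 0 := by
  rcases eq_or_ne x 0 with rfl | hx
  · simp [dslope_same, Real.deriv_sinh]
  · rw [dslope_of_ne _ hx, slope_def_field]
    simp only [Real.sinh_zero, sub_zero]
    exact div_ne_zero (Real.sinh_ne_zero.2 hx) hx

lemma analyticAt_dslope_sinh (x : ℝ) : AnalyticAt ℝ (dslope Real.sinh 0) x := by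
  rcases eq_or_ne x 0 with rfl | hx
  · obtain ⟨p, hp⟩ := analyticAt_sinh 0
    exact ⟨p.fslope, hp.has_fpower_series_dslope_fslope⟩
  · have h1 : AnalyticAt ℝ (fun y : ℝ => (Real.sinh y - Real.sinh 0) / (y - 0)) x := by
      exact ((analyticAt_sinh x).sub analyticAt_const).div
        (analyticAt_id.sub analyticAt_const) (by simpa using hx)
    refine h1.congr ?_
    filter_upwards [eventually_ne_nhds hx] with y hy
    rw [dslope_of_ne _ hy, slope_def_field]

lemma ilwM_eq' : ilwM = fun ξ : ℝ => -ξ / dslope Real.sinh 0 ξ ^ 2 := by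
  funext ξ
  rcases eq_or_ne ξ 0 with rfl | hξ
  · simp [ilwM_eq]
  · rw [ilwM_eq, dslope_of_ne _ hξ, slope_def_field]
    have hs : Real.sinh ξ ≠ 0 := Real.sinh_ne_zero.2 hξ
    simp only [Real.sinh_zero, sub_zero]
    field_simp

lemma sinh_lower (t : ℝ) (ht : 0 ≤ t) : t * Real.exp (t / 2) / 2 ≤ Real.sinh t := by
  have h1 : Real.sinh t = 2 * Real.sinh (t / 2) * Real.cosh (t / 2) := by
    rw [← Real.sinh_two_mul]; ring_nf
  have h2 : t / 2 ≤ Real.sinh (t / 2) := Real.self_le_sinh_iff.2 (by linarith)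
  have h3 : Real.exp (t / 2) / 2 ≤ Real.cosh (t / 2) := by
    rw [Real.cosh_eq]
    have := (Real.exp_pos (-(t / 2))).le
    linarith
  have h4 : (0:ℝ) < Real.exp (t / 2) / 2 := by positivity
  calc t * Real.exp (t / 2) / 2 = 2 * (t / 2) * (Real.exp (t / 2) / 2) := by ring
    _ ≤ 2 * Real.sinh (t / 2) * Real.cosh (t / 2) := by
        apply mul_le_mul (by linarith) h3 h4.le
        linarith
    _ = Real.sinh t := h1.symm

lemma ilwM_decay (ξ : ℝ) : |ilwM ξ| ≤ 8 * Real.exp (-(1/2) * |ξ|) := by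
  set t := |ξ| with htdef
  have ht : 0 ≤ t := abs_nonneg ξ
  have habs : |ilwM ξ| = t ^ 3 / Real.sinh t ^ 2 := by
    rw [htdef, ilwM_eq, abs_div, abs_neg, abs_pow, abs_pow, Real.abs_sinh]
  rw [habs]
  rcases eq_or_ne t 0 with h0 | h0
  · rw [h0]; norm_num
  · have htpos : 0 < t := lt_of_le_of_ne ht (Ne.symm h0)
    have hsl := sinh_lower t ht
    have hden : 0 < t * Real.exp (t / 2) / 2 := by positivity
    have h1 : t ^ 3 / Real.sinh t ^ 2 ≤ t ^ 3 / (t * Real.exp (t / 2) / 2) ^ 2 := by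
      have hXs : (t * Real.exp (t / 2) / 2) ^ 2 ≤ Real.sinh t ^ 2 :=
        pow_le_pow_left₀ hden.le hsl 2
      gcongr
    have he : Real.exp (t / 2) ^ 2 = Real.exp t := by
      rw [pow_two, ← Real.exp_add]; norm_num
    have h2 : t ^ 3 / (t * Real.exp (t / 2) / 2) ^ 2 = 4 * t * Real.exp (-t) := by
      rw [Real.exp_neg]
      field_simp
      linear_combination (-4) * he
    have h3 : t ≤ 2 * Real.exp (t / 2) := by
      nlinarith [Real.add_one_le_exp (t / 2)]
    have h4 : 4 * t * Real.exp (-t) ≤ 8 * Real.exp (-(1/2) * t) := by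
      have := mul_le_mul_of_nonneg_right h3 (Real.exp_pos (-t)).le
      have hee : Real.exp (t / 2) * Real.exp (-t) = Real.exp (-(1/2) * t) := by
        rw [← Real.exp_add]; congr 1; ring
      calc 4 * t * Real.exp (-t) ≤ 4 * (2 * Real.exp (t / 2)) * Real.exp (-t) := by
            nlinarith [Real.exp_pos (-t)]
        _ = 8 * Real.exp (-(1/2) * t) := by rw [mul_assoc, mul_assoc, hee]; ring
    linarith [h1, h2 ▸ h1]

theorem ilwM_odd_analytic_decay :
    (∀ ξ : ℝ, ilwM (-ξ) = -ilwM ξ) ∧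
    (∀ x : ℝ, AnalyticAt ℝ ilwM x) ∧
    ∃ K > (0 : ℝ), ∃ c > (0 : ℝ), ∀ ξ : ℝ, |ilwM ξ| ≤ K * Real.exp (-c * |ξ|) := by
  refine ⟨fun ξ => ?_, fun x => ?_, 8, by norm_num, 1/2, by norm_num, fun ξ => ilwM_decay ξ⟩
  · rw [ilwM_eq, ilwM_eq]
    simp [neg_div]
    ring
  · rw [ilwM_eq']
    exact analyticAt_id.neg.div ((analyticAt_dslope_sinh x).pow 2)
      (pow_ne_zero 2 (dslope_sinh_ne_zero x))
end

section
/- Let d(ξ,η) = (1/4)(−1 − tanh(ξ)tanh(η) + tanh(ξ)tanh(ξ+η) + tanh(η)tanh(ξ+η)). Then there exist K, c > 0 such that |d(ξ,η)| ≤ K·exp(−c·min(|ξ|, |η|, |ξ+η|)) for all real ξ, η. -/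
lemma d_symbol_identity (ξ η : ℝ) :
    (1 / 4) * (-1 - Real.tanh ξ * Real.tanh η + Real.tanh ξ * Real.tanh (ξ + η) +
        Real.tanh η * Real.tanh (ξ + η)) =
      -(1 / (4 * Real.cosh ξ * Real.cosh η * Real.cosh (ξ + η))) := by
  have hξ := (Real.cosh_pos ξ).ne'
  have hη := (Real.cosh_pos η).ne'
  have hs := (Real.cosh_pos (ξ + η)).ne'
  rw [Real.tanh_eq_sinh_div_cosh, Real.tanh_eq_sinh_div_cosh, Real.tanh_eq_sinh_div_cosh]
  rw [Real.cosh_eq, Real.cosh_eq, Real.cosh_eq, Real.sinh_eq, Real.sinh_eq, Real.sinh_eq] at *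
  rw [Real.exp_add, neg_add, Real.exp_add, Real.exp_neg, Real.exp_neg] at *
  have ha := (Real.exp_pos ξ).ne'
  have hb := (Real.exp_pos η).ne'
  field_simp at *
  ring_nf

lemma cosh_ge (x : ℝ) : Real.exp |x| / 2 ≤ Real.cosh x := by
  rcases abs_cases x with ⟨h, _⟩ | ⟨h, _⟩
  · rw [h, Real.cosh_eq]; have := (Real.exp_pos (-x)).le; linarith
  · rw [h, Real.cosh_eq]
    have : 0 < Real.exp x := Real.exp_pos x
    linarith [this.le]

theorem d_symbol_decay :
    ∃ K > (0 : ℝ), ∃ c > (0 : ℝ), ∀ ξ η : ℝ,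
      |(1 / 4) * (-1 - Real.tanh ξ * Real.tanh η + Real.tanh ξ * Real.tanh (ξ + η) +
          Real.tanh η * Real.tanh (ξ + η))| ≤
        K * Real.exp (-c * min |ξ| (min |η| |ξ + η|)) := by
  refine ⟨1/2, by norm_num, 1, by norm_num, fun ξ η => ?_⟩
  rw [d_symbol_identity]
  have hξ := Real.cosh_pos ξ
  have hη := Real.cosh_pos η
  have hs := Real.cosh_pos (ξ + η)
  have hprod : 0 < 4 * Real.cosh ξ * Real.cosh η * Real.cosh (ξ + η) := by positivity
  rw [abs_neg, abs_of_pos (by positivity)]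
  set m := min |ξ| (min |η| |ξ + η|) with hm
  have c1 : (1:ℝ) ≤ Real.cosh ξ := Real.one_le_cosh ξ
  have c2 : (1:ℝ) ≤ Real.cosh η := Real.one_le_cosh η
  have c3 : (1:ℝ) ≤ Real.cosh (ξ + η) := Real.one_le_cosh (ξ + η)
  have key : Real.exp m / 2 ≤ Real.cosh ξ * Real.cosh η * Real.cosh (ξ + η) := by
    have h1 : m ≤ |ξ| := min_le_left _ _
    have h2 : m ≤ |η| := le_trans (min_le_right _ _) (min_le_left _ _)
    have h3 : m ≤ |ξ + η| := le_trans (min_le_right _ _) (min_le_right _ _)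
    have e1 : Real.exp m / 2 ≤ Real.cosh ξ :=
      le_trans (by linarith [Real.exp_le_exp.mpr h1]) (cosh_ge ξ)
    calc Real.exp m / 2 ≤ Real.cosh ξ * 1 := by linarith
    _ ≤ Real.cosh ξ * (Real.cosh η * Real.cosh (ξ + η)) := by
        apply mul_le_mul_of_nonneg_left _ hξ.le
        nlinarith
    _ = Real.cosh ξ * Real.cosh η * Real.cosh (ξ + η) := by ring
  have hE : 0 < Real.exp m := Real.exp_pos m
  rw [div_le_iff₀ hprod, neg_one_mul, Real.exp_neg]
  rw [show (1:ℝ)/2 * (Real.exp m)⁻¹ * (4 * Real.cosh ξ * Real.cosh η * Real.cosh (ξ + η)) =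
    (Real.cosh ξ * Real.cosh η * Real.cosh (ξ + η)) * 2 / Real.exp m by ring]
  rw [le_div_iff₀ hE]
  nlinarith
end
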